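/- Let f : F_2^m → F_2 with f(0)=0, let s_v = (v·x)_{x ∈ F_2^m\{0}} and f = (f(x))_{x ∈ F_2^m\{0}}. For distinct a, b ∈ F_2^m, the codeword f + s_a covers f + s_b if and only if f̂(a) − f̂(b) = 2^m. -/
import Mathlib


open Finset

/-- Standard inner product on `F_2^m`. -/
def ip {m : ℕ} (w x : Fin m → ZMod 2) : ZMod 2 := ∑ i, w i * x i

/-- Signed Walsh transform `f̂(w) = Σ_x (-1)^(f(x)+w·x)`. -/
def walshS {m : ℕ} (f : (Fin m → ZMod 2) → ZMod 2) (w : Fin m → ZMod 2) : ℤ :=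
  ∑ x : Fin m → ZMod 2, (-1 : ℤ) ^ ((f x + ip w x).val)

/-- `covers c d` : support containment `Supp(c) ⊆ Supp(d)`, i.e. `c ⪯ d`. -/
def covers {ι : Type*} (c d : ι → ZMod 2) : Prop := ∀ x, c x ≠ 0 → d x ≠ 0

lemma ip_add_right {m : ℕ} (c x y : Fin m → ZMod 2) :
    ip c (x + y) = ip c x + ip c y := by
  simp [ip, mul_add, Finset.sum_add_distrib]

lemma ip_single {m : ℕ} (c : Fin m → ZMod 2) (i : Fin m) :
    ip c (Pi.single i 1) = c i := by
  classical
  simp [ip, Pi.single_apply, mul_ite, Finset.sum_ite_eq']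

lemma neg_one_pow_add (u v : ZMod 2) :
    (-1 : ℤ) ^ u.val * (-1) ^ v.val = (-1) ^ ((u + v).val) := by
  revert u v; decide

lemma char_sum {m : ℕ} (c : Fin m → ZMod 2) (hc : c ≠ 0) :
    ∑ x : Fin m → ZMod 2, (-1 : ℤ) ^ ((ip c x).val) = 0 := by
  obtain ⟨i, hi⟩ : ∃ i, c i ≠ 0 := by
    by_contra h; push_neg at h; exact hc (funext h)
  have hci : c i = 1 := by
    revert hi; generalize c i = u; revert u; decide
  apply Finset.sum_involution (fun x _ => x + Pi.single i 1)
  · intro x _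
    have h1 : ip c (x + Pi.single i 1) = ip c x + 1 := by
      rw [ip_add_right, ip_single, hci]
    rw [h1]
    have : ∀ u : ZMod 2, (-1 : ℤ) ^ u.val + (-1) ^ ((u + 1).val) = 0 := by decide
    exact this _
  · intro x _ _
    intro h
    have := congrFun h i
    simp at this
  · intro x _
    rw [add_assoc, ← Pi.single_add]
    have h2 : (1 + 1 : ZMod 2) = 0 := by decide
    simp [h2]
  · intro x _; exact Finset.mem_univ _

lemma ip_add_left {m : ℕ} (a b x : Fin m → ZMod 2) :
    ip (a + b) x = ip a x + ip b x := by
  simp [ip, add_mul, Finset.sum_add_distrib]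

lemma ip_zero_right {m : ℕ} (a : Fin m → ZMod 2) : ip a 0 = 0 := by
  simp [ip]

lemma D_nonneg (u v : ZMod 2) :
    (0 : ℤ) ≤ (1 - (-1) ^ u.val * (-1) ^ v.val) - ((-1) ^ u.val - (-1) ^ v.val) := by
  revert u v; decide

lemma D_zero_iff (u v : ZMod 2) :
    (1 - (-1 : ℤ) ^ u.val * (-1) ^ v.val) - ((-1) ^ u.val - (-1) ^ v.val) = 0
      ↔ (u ≠ 0 → v ≠ 0) := by
  revert u v; decide

theorem stmt_4 (m : ℕ) (f : (Fin m → ZMod 2) → ZMod 2) (hf0 : f 0 = 0)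
    (a b : Fin m → ZMod 2) (hab : a ≠ b) :
    covers (fun x : {x : Fin m → ZMod 2 // x ≠ 0} => f x.1 + ip a x.1)
           (fun x : {x : Fin m → ZMod 2 // x ≠ 0} => f x.1 + ip b x.1)
      ↔ walshS f a - walshS f b = 2 ^ m := by
  classical
  set A : (Fin m → ZMod 2) → ℤ := fun x => (-1) ^ ((f x + ip a x).val) with hA
  set B : (Fin m → ZMod 2) → ℤ := fun x => (-1) ^ ((f x + ip b x).val) with hB
  set D : (Fin m → ZMod 2) → ℤ := fun x => (1 - A x * B x) - (A x - B x) with hD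
  have hcne : a + b ≠ 0 := by
    intro h; apply hab; funext i
    have h2 : a i + b i = 0 := congrFun h i
    revert h2; generalize a i = u; generalize b i = v; revert u v; decide
  have hABx : ∀ x, A x * B x = (-1 : ℤ) ^ ((ip (a + b) x).val) := by
    intro x
    rw [hA, hB, neg_one_pow_add]
    congr 1
    have h0 : f x + f x = 0 := by
      generalize f x = u; revert u; decide
    rw [ip_add_left]
    linear_combination congrArg ZMod.val (by linear_combination h0 :
      (f x + ip a x) + (f x + ip b x) = ip a x + ip b x)
  have hsumAB : ∑ x : Fin m → ZMod 2, A x * B x = 0 := by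
    simp_rw [hABx]; exact char_sum _ hcne
  have hcard : (Finset.univ : Finset (Fin m → ZMod 2)).card = 2 ^ m := by
    simp [Finset.card_univ]
  have key : walshS f a - walshS f b = 2 ^ m - ∑ x : Fin m → ZMod 2, D x := by
    have h1 : walshS f a - walshS f b = ∑ x : Fin m → ZMod 2, (A x - B x) := by
      rw [walshS, walshS, ← Finset.sum_sub_distrib]
    have h2 : ∑ x : Fin m → ZMod 2, D x
        = ∑ x : Fin m → ZMod 2, (1 - A x * B x) - ∑ x : Fin m → ZMod 2, (A x - B x) := by
      rw [← Finset.sum_sub_distrib]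
    have h3 : ∑ x : Fin m → ZMod 2, (1 - A x * B x) = 2 ^ m := by
      rw [Finset.sum_sub_distrib, hsumAB, Finset.sum_const, hcard]; simp
    rw [h1]; rw [h3] at h2; linarith
  rw [key]
  constructor
  · intro hcov
    have hall : ∀ x ∈ (Finset.univ : Finset (Fin m → ZMod 2)), D x = 0 := by
      intro x _
      rw [hD]
      rw [D_zero_iff]
      intro hx
      by_cases h0 : x = 0
      · exfalso; apply hx; rw [h0, ip_zero_right, hf0, add_zero]
      · exact hcov ⟨x, h0⟩ hx
    rw [Finset.sum_eq_zero hall]; ring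
  · intro heq
    have hsum0 : ∑ x : Fin m → ZMod 2, D x = 0 := by linarith
    have hall := (Finset.sum_eq_zero_iff_of_nonneg
      (fun x _ => D_nonneg (f x + ip a x) (f x + ip b x))).mp hsum0
    intro x hx
    have := (D_zero_iff (f x.1 + ip a x.1) (f x.1 + ip b x.1)).mp
      (hall x.1 (Finset.mem_univ _))
    exact this hx
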